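/- Let τ > 0, N a natural number, and for k = 1,…,N let E_k⁰, E_k¹ : ℝ → ℝ be continuous functions; let Ψ_N be the NuFI composite map of the corresponding backward Störmer–Verlet steps. Let f₀ : ℝ × ℝ → ℝ be square-integrable with respect to the volume measure on ℝ × ℝ. Then ∫∫ (f₀(Ψ_N(x,v)))² dx dv = ∫∫ (f₀(x,v))² dx dv (conservation of the L²-norm by the NuFI discrete solution). -/

import Mathlib

open MeasureTheory

/-- The backward Störmer–Verlet step for the Vlasov–Poisson characteristics. -/
noncomputable def svStep (τ : ℝ) (E0 E1 : ℝ → ℝ) : ℝ × ℝ → ℝ × ℝ :=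
  fun p =>
    let vhalf := p.2 + (τ / 2) * E1 p.1
    let x1 := p.1 - τ * vhalf
    (x1, vhalf + (τ / 2) * E0 x1)

/-- The NuFI composite map `Ψ_N = Ψ⁽¹⁾ ∘ Ψ⁽²⁾ ∘ ⋯ ∘ Ψ⁽ᴺ⁾`. -/
noncomputable def nufiComp (τ : ℝ) (E0 E1 : ℕ → ℝ → ℝ) : ℕ → (ℝ × ℝ → ℝ × ℝ)
  | 0 => id
  | n + 1 => nufiComp τ E0 E1 n ∘ svStep τ (E0 (n + 1)) (E1 (n + 1))

lemma shear_mp (c : ℝ → ℝ) (hc : Measurable c) :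
    MeasurePreserving (fun p : ℝ × ℝ => (p.1, p.2 + c p.1))
      (volume : Measure (ℝ × ℝ)) volume := by
  rw [Measure.volume_eq_prod]
  exact (MeasurePreserving.id volume).skew_product
    (by fun_prop) (ae_of_all _ fun x => map_add_right_eq_self volume (c x))

lemma shear_fst_mp (τ : ℝ) :
    MeasurePreserving (fun p : ℝ × ℝ => (p.1 - τ * p.2, p.2))
      (volume : Measure (ℝ × ℝ)) volume := by
  have h1 : MeasurePreserving (Prod.swap : ℝ × ℝ → ℝ × ℝ)
      (volume : Measure (ℝ × ℝ)) volume := by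
    rw [Measure.volume_eq_prod]; exact Measure.measurePreserving_swap
  have h2 := shear_mp (fun y => -(τ * y)) (by fun_prop)
  have : (fun p : ℝ × ℝ => (p.1 - τ * p.2, p.2)) =
      Prod.swap ∘ (fun p : ℝ × ℝ => (p.1, p.2 + (fun y => -(τ * y)) p.1)) ∘ Prod.swap := by
    funext p; simp [sub_eq_add_neg]
  rw [this]
  exact h1.comp (h2.comp h1)

lemma svStep_mp (τ : ℝ) (E0 E1 : ℝ → ℝ) (h0 : Continuous E0) (h1 : Continuous E1) :
    MeasurePreserving (svStep τ E0 E1) (volume : Measure (ℝ × ℝ)) volume := by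
  have : svStep τ E0 E1 =
      (fun p : ℝ × ℝ => (p.1, p.2 + (τ / 2) * E0 p.1)) ∘
      (fun p : ℝ × ℝ => (p.1 - τ * p.2, p.2)) ∘
      (fun p : ℝ × ℝ => (p.1, p.2 + (τ / 2) * E1 p.1)) := by
    funext p; simp [svStep]
  rw [this]
  exact (shear_mp (fun x => (τ / 2) * E0 x) (by fun_prop)).comp
    ((shear_fst_mp τ).comp (shear_mp (fun x => (τ / 2) * E1 x) (by fun_prop)))

lemma nufi_mp (τ : ℝ) (E0 E1 : ℕ → ℝ → ℝ) (N : ℕ)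
    (hE0 : ∀ k, 1 ≤ k → k ≤ N → Continuous (E0 k))
    (hE1 : ∀ k, 1 ≤ k → k ≤ N → Continuous (E1 k)) :
    ∀ n, n ≤ N → MeasurePreserving (nufiComp τ E0 E1 n)
      (volume : Measure (ℝ × ℝ)) volume := by
  intro n
  induction n with
  | zero => intro _; exact MeasurePreserving.id _
  | succ m ih =>
    intro h
    exact (ih (le_of_lt (Nat.lt_of_succ_le h))).comp
      (svStep_mp τ _ _ (hE0 (m + 1) (Nat.succ_le_succ (Nat.zero_le m)) h)
        (hE1 (m + 1) (Nat.succ_le_succ (Nat.zero_le m)) h))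

/-- Conservation of the $L^2$-norm by the NuFI discrete solution. -/
theorem nufi_L2_conservation (τ : ℝ) (hτ : 0 < τ) (N : ℕ) (E0 E1 : ℕ → ℝ → ℝ)
    (hE0 : ∀ k, 1 ≤ k → k ≤ N → Continuous (E0 k))
    (hE1 : ∀ k, 1 ≤ k → k ≤ N → Continuous (E1 k))
    (f₀ : ℝ × ℝ → ℝ)
    (hf₀ : MemLp f₀ 2 (volume : Measure (ℝ × ℝ))) :
    ∫ p : ℝ × ℝ, (f₀ (nufiComp τ E0 E1 N p)) ^ 2 = ∫ p : ℝ × ℝ, (f₀ p) ^ 2 := by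
  have hmp := nufi_mp τ E0 E1 N hE0 hE1 N le_rfl
  have hg : AEStronglyMeasurable (fun p : ℝ × ℝ => (f₀ p) ^ 2)
      (volume : Measure (ℝ × ℝ)) := hf₀.aestronglyMeasurable.pow 2
  calc ∫ p : ℝ × ℝ, (f₀ (nufiComp τ E0 E1 N p)) ^ 2
      = ∫ p : ℝ × ℝ, (f₀ p) ^ 2 ∂(Measure.map (nufiComp τ E0 E1 N) volume) := by
        rw [integral_map hmp.aemeasurable (by rwa [hmp.map_eq])]
    _ = ∫ p : ℝ × ℝ, (f₀ p) ^ 2 := by rw [hmp.map_eq]
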